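/- For every real t > 0, ∫_{Δ₂} (∂F₂/∂x)(x,q) dx dq = ∫₁² dx/(2(x+2t)^{3/2}(2−x)^{1/2}), where F₂(x,q) = x^{1/2}(x−1)^{1/2}/(4(x+2t)^{3/2} q^{3/4}(1−q)^{1/2}) and ∂F₂/∂x denotes the partial derivative of F₂ with respect to x; all fractional powers are the positive real ones. -/

import Mathlib

open MeasureTheory Set

/-- The region `Δ₂ = {(x,q) : 1 < x < 2, 0 < q ≤ ((2−x)/x)²}`. -/
def Delta2 : Set (ℝ × ℝ) :=
  {z | 1 < z.1 ∧ z.1 < 2 ∧ 0 < z.2 ∧ z.2 ≤ ((2 - z.1) / z.1) ^ 2}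

noncomputable def gg (t x : ℝ) : ℝ :=
  x ^ ((1:ℝ)/2) * (x - 1) ^ ((1:ℝ)/2) / (4 * (x + 2*t) ^ ((3:ℝ)/2))

noncomputable def GG (t x : ℝ) : ℝ :=
  (((1:ℝ)/2 * x ^ ((1:ℝ)/2 - 1) * (x-1) ^ ((1:ℝ)/2)) * (4 * (x+2*t) ^ ((3:ℝ)/2))
    - x ^ ((1:ℝ)/2) * (x-1) ^ ((1:ℝ)/2) * (4 * ((3:ℝ)/2 * (x+2*t) ^ ((3:ℝ)/2 - 1))))
    / (4 * (x+2*t) ^ ((3:ℝ)/2))^2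
  + x ^ ((1:ℝ)/2) * ((1:ℝ)/2 * (x-1) ^ ((1:ℝ)/2 - 1)) / (4 * (x+2*t) ^ ((3:ℝ)/2))

noncomputable def cc (q : ℝ) : ℝ := q ^ ((3:ℝ)/4) * (1 - q) ^ ((1:ℝ)/2)

lemma gg_hasDeriv {t x : ℝ} (ht : 0 < t) (hx : 1 < x) : HasDerivAt (gg t) (GG t x) x := by
  have hx0 : (0:ℝ) < x := by linarith
  have hx1 : x - 1 ≠ 0 := by intro h; nlinarith [h]
  have hxt : (0:ℝ) < x + 2*t := by linarith
  have hd0 : (0:ℝ) < 4 * (x + 2*t) ^ ((3:ℝ)/2) :=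
    mul_pos four_pos (Real.rpow_pos_of_pos hxt _)
  have h1 : HasDerivAt (fun y : ℝ => y ^ ((1:ℝ)/2)) ((1:ℝ)/2 * x ^ ((1:ℝ)/2 - 1)) x :=
    Real.hasDerivAt_rpow_const (Or.inl hx0.ne')
  have h2 : HasDerivAt (fun y : ℝ => (y - 1) ^ ((1:ℝ)/2))
      (1 * ((1:ℝ)/2) * (x - 1) ^ ((1:ℝ)/2 - 1)) x :=
    ((hasDerivAt_id x).sub_const 1).rpow_const (Or.inl hx1)
  have hd : HasDerivAt (fun y : ℝ => 4 * (y + 2*t) ^ ((3:ℝ)/2))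
      (4 * (1 * ((3:ℝ)/2) * (x + 2*t) ^ ((3:ℝ)/2 - 1))) x :=
    (((hasDerivAt_id x).add_const (2*t)).rpow_const (Or.inl hxt.ne')).const_mul 4
  have := (h1.mul h2).div hd hd0.ne'
  refine this.congr_deriv ?_
  unfold GG
  simp only [Pi.mul_apply]
  field_simp
  ring

lemma gg_one (t : ℝ) : gg t 1 = 0 := by
  simp [gg, Real.zero_rpow (by norm_num : ((1:ℝ)/2) ≠ 0)]

lemma int_sub_rpow : IntegrableOn (fun x : ℝ => (x - 1) ^ ((1:ℝ)/2 - 1)) (Ioo 1 2) := by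
  rw [show ((1:ℝ)/2 - 1) = (-(1/2) : ℝ) by norm_num]
  have h : IntervalIntegrable (fun x : ℝ => x ^ (-(1/2) : ℝ)) volume 0 1 :=
    intervalIntegral.intervalIntegrable_rpow' (by norm_num)
  have h2 : IntervalIntegrable (fun x : ℝ => (x - 1) ^ (-(1/2) : ℝ)) volume 1 2 := by
    have h3 := h.comp_sub_right 1
    norm_num only at h3
    exact h3
  exact ((intervalIntegrable_iff_integrableOn_Ioc_of_le (by norm_num)).1 h2).mono_set
    Ioo_subset_Ioc_self

lemma GG_integrable (t : ℝ) (ht : 0 < t) : IntegrableOn (GG t) (Ioo 1 2) := by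
  have hid1 : ∀ x ∈ Icc (1:ℝ) 2, id x ≠ 0 ∨ (0:ℝ) ≤ (1:ℝ)/2 - 1 :=
    fun x hx => Or.inl (by simp only [id_eq]; have := hx.1; intro h; rw [h] at this; linarith)
  have hidt : ∀ x ∈ Icc (1:ℝ) 2, id x + 2*t ≠ 0 ∨ (0:ℝ) ≤ (3:ℝ)/2 :=
    fun x hx => Or.inr (by norm_num)
  have hidt' : ∀ x ∈ Icc (1:ℝ) 2, id x + 2*t ≠ 0 ∨ (0:ℝ) ≤ (3:ℝ)/2 - 1 :=
    fun x hx => Or.inr (by norm_num)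
  have hc1 : ContinuousOn (fun x : ℝ =>
      (((1:ℝ)/2 * x ^ ((1:ℝ)/2 - 1) * (x-1) ^ ((1:ℝ)/2)) * (4 * (x+2*t) ^ ((3:ℝ)/2))
      - x ^ ((1:ℝ)/2) * (x-1) ^ ((1:ℝ)/2) * (4 * ((3:ℝ)/2 * (x+2*t) ^ ((3:ℝ)/2 - 1))))
      / (4 * (x+2*t) ^ ((3:ℝ)/2))^2) (Icc 1 2) := by
    apply ContinuousOn.div
    · apply ContinuousOn.sub
      · exact ((continuousOn_const.mul (continuousOn_id.rpow_const hid1)).mul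
            ((continuousOn_id.sub continuousOn_const).rpow_const
              (fun x hx => Or.inr (by norm_num)))).mul
            (continuousOn_const.mul ((continuousOn_id.add continuousOn_const).rpow_const hidt))
      · exact (((continuousOn_id.rpow_const (fun x hx => Or.inr (by norm_num))).mul
            ((continuousOn_id.sub continuousOn_const).rpow_const
              (fun x hx => Or.inr (by norm_num)))).mul
            (continuousOn_const.mul (continuousOn_const.mul
              ((continuousOn_id.add continuousOn_const).rpow_const hidt'))))
    · exact (continuousOn_const.mul ((continuousOn_id.add continuousOn_const).rpow_const
        hidt)).pow 2
    · intro x hx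
      have hp : (0:ℝ) < x + 2*t := by have := hx.1; linarith
      have := Real.rpow_pos_of_pos hp ((3:ℝ)/2)
      positivity
  have hi1 : IntegrableOn (fun x : ℝ =>
      (((1:ℝ)/2 * x ^ ((1:ℝ)/2 - 1) * (x-1) ^ ((1:ℝ)/2)) * (4 * (x+2*t) ^ ((3:ℝ)/2))
      - x ^ ((1:ℝ)/2) * (x-1) ^ ((1:ℝ)/2) * (4 * ((3:ℝ)/2 * (x+2*t) ^ ((3:ℝ)/2 - 1))))
      / (4 * (x+2*t) ^ ((3:ℝ)/2))^2) (Ioo 1 2) :=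
    (hc1.integrableOn_Icc).mono_set Ioo_subset_Icc_self
  have hi2 : IntegrableOn (fun x : ℝ =>
      x ^ ((1:ℝ)/2) * ((1:ℝ)/2 * (x-1) ^ ((1:ℝ)/2 - 1)) / (4 * (x+2*t) ^ ((3:ℝ)/2)))
      (Ioo 1 2) := by
    apply Integrable.mono' int_sub_rpow
    · apply ContinuousOn.aestronglyMeasurable _ measurableSet_Ioo
      apply ContinuousOn.div
      · exact (continuousOn_id.rpow_const (fun x hx => Or.inr (by norm_num))).mul
          (continuousOn_const.mul ((continuousOn_id.sub continuousOn_const).rpow_const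
            (fun x hx => Or.inl (by
              simp only [Pi.sub_apply, id_eq]; have := hx.1; intro h
              have : x = 1 := by linarith
              simp [this] at hx))))
      · exact continuousOn_const.mul ((continuousOn_id.add continuousOn_const).rpow_const
          (fun x hx => Or.inr (by norm_num)))
      · intro x hx
        have hp : (0:ℝ) < x + 2*t := by have := hx.1; linarith
        have := Real.rpow_pos_of_pos hp ((3:ℝ)/2)
        positivity
    · filter_upwards [ae_restrict_mem measurableSet_Ioo] with x hx
      have hx1 : (1:ℝ) < x := hx.1
      have hx2 : x < 2 := hx.2
      have hxm : (0:ℝ) < x - 1 := by linarith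
      have hp : (0:ℝ) < x + 2*t := by linarith
      have hrp : (0:ℝ) < (x-1) ^ ((1:ℝ)/2 - 1) := Real.rpow_pos_of_pos hxm _
      have hxh : (0:ℝ) < x ^ ((1:ℝ)/2) := Real.rpow_pos_of_pos (by linarith) _
      have hx12 : x ^ ((1:ℝ)/2) ≤ 2 := by
        calc x ^ ((1:ℝ)/2) ≤ 2 ^ ((1:ℝ)/2) :=
              Real.rpow_le_rpow (by linarith) hx2.le (by norm_num)
          _ ≤ 2 ^ (1:ℝ) := Real.rpow_le_rpow_of_exponent_le (by norm_num) (by norm_num)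
          _ = 2 := Real.rpow_one 2
      have hd1 : (1:ℝ) ≤ (x + 2*t) ^ ((3:ℝ)/2) :=
        Real.one_le_rpow (by linarith) (by norm_num)
      rw [Real.norm_eq_abs, abs_of_nonneg (by positivity)]
      rw [div_le_iff₀ (by positivity)]
      calc x ^ ((1:ℝ)/2) * ((1:ℝ)/2 * (x-1) ^ ((1:ℝ)/2 - 1))
          ≤ 2 * ((1:ℝ)/2 * (x-1) ^ ((1:ℝ)/2 - 1)) := by nlinarith
        _ = (x-1) ^ ((1:ℝ)/2 - 1) := by ring
        _ ≤ (x-1) ^ ((1:ℝ)/2 - 1) * (4 * (x + 2*t) ^ ((3:ℝ)/2)) := by nlinarith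
  exact (hi1.add hi2).congr (Filter.Eventually.of_forall fun x => rfl)

lemma cc_inv_integrable : IntegrableOn (fun q : ℝ => (cc q)⁻¹) (Ioo 0 1) := by
  have hw : ∀ q ∈ Ioo (0:ℝ) 1, (cc q)⁻¹ = q ^ (-((3:ℝ)/4)) * (1 - q) ^ (-((1:ℝ)/2)) := by
    intro q hq
    rw [cc, mul_inv, ← Real.rpow_neg hq.1.le, ← Real.rpow_neg (by linarith [hq.2])]
  have hcont : ∀ s ⊆ Ioo (0:ℝ) 1, ContinuousOn
      (fun q : ℝ => q ^ (-((3:ℝ)/4)) * (1 - q) ^ (-((1:ℝ)/2))) s := by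
    intro s hs
    apply ContinuousOn.mul
    · exact continuousOn_id.rpow_const (fun q hq => Or.inl (by
        simp only [id_eq]; exact (hs hq).1.ne'))
    · exact (continuousOn_const.sub continuousOn_id).rpow_const (fun q hq => Or.inl (by
        simp only [Pi.sub_apply, id_eq]; have := (hs hq).2; intro h; linarith))
  have hsplit : Ioo (0:ℝ) 1 = Ioc (0:ℝ) (1/2) ∪ Ioo (1/2) 1 := by
    ext q
    simp only [mem_Ioo, mem_Ioc, mem_union]
    constructor
    · rintro ⟨h0, h1⟩
      rcases le_or_gt q (1/2) with h | h
      · exact Or.inl ⟨h0, h⟩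
      · exact Or.inr ⟨h, h1⟩
    · rintro (⟨h0, h1⟩ | ⟨h0, h1⟩) <;> constructor <;> linarith
  have hI1 : IntegrableOn (fun q : ℝ => q ^ (-((3:ℝ)/4)) * (1 - q) ^ (-((1:ℝ)/2)))
      (Ioc (0:ℝ) (1/2)) := by
    have hg : IntegrableOn (fun q : ℝ => 2 * q ^ (-((3:ℝ)/4))) (Ioc (0:ℝ) (1/2)) := by
      have h : IntervalIntegrable (fun x : ℝ => x ^ (-((3:ℝ)/4))) volume 0 (1/2) :=
        intervalIntegral.intervalIntegrable_rpow' (by norm_num)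
      exact (((intervalIntegrable_iff_integrableOn_Ioc_of_le (by norm_num)).1 h).const_mul 2)
    apply Integrable.mono' hg
    · exact ContinuousOn.aestronglyMeasurable (hcont _ (fun q hq =>
        ⟨hq.1, by have := hq.2; linarith⟩)) measurableSet_Ioc
    · filter_upwards [ae_restrict_mem measurableSet_Ioc] with q hq
      have h0 : (0:ℝ) < q := hq.1
      have h1 : q ≤ 1/2 := hq.2
      have hq1 : (0:ℝ) < 1 - q := by linarith
      have hb : (1 - q) ^ (-((1:ℝ)/2)) ≤ (1 - q) ^ (-(1:ℝ)) :=
        Real.rpow_le_rpow_of_exponent_ge hq1 (by linarith) (by norm_num)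
      have hb2 : (1 - q) ^ (-(1:ℝ)) = (1 - q)⁻¹ := Real.rpow_neg_one _
      have hb3 : (1 - q)⁻¹ ≤ 2 := by
        rw [inv_le_comm₀ hq1 (by norm_num)] <;> linarith
      have hbb : (1 - q) ^ (-((1:ℝ)/2)) ≤ 2 := by rw [hb2] at hb; linarith
      have hqp : (0:ℝ) < q ^ (-((3:ℝ)/4)) := Real.rpow_pos_of_pos h0 _
      have h1qp : (0:ℝ) < (1 - q) ^ (-((1:ℝ)/2)) := Real.rpow_pos_of_pos hq1 _
      rw [Real.norm_eq_abs, abs_of_nonneg (by positivity)]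
      nlinarith
  have hI2 : IntegrableOn (fun q : ℝ => q ^ (-((3:ℝ)/4)) * (1 - q) ^ (-((1:ℝ)/2)))
      (Ioo (1/2:ℝ) 1) := by
    have hg : IntegrableOn (fun q : ℝ => 2 * (1 - q) ^ (-((1:ℝ)/2))) (Ioo (1/2:ℝ) 1) := by
      have h : IntervalIntegrable (fun x : ℝ => x ^ (-((1:ℝ)/2))) volume 0 (1/2) :=
        intervalIntegral.intervalIntegrable_rpow' (by norm_num)
      have h2 := h.comp_sub_left 1
      norm_num only at h2
      have h3 : IntegrableOn (fun x : ℝ => (1 - x) ^ (-((1:ℝ)/2))) (Ioc (1/2:ℝ) 1) := h2.2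
      exact (show IntegrableOn _ _ _ from h3.const_mul 2).mono_set Ioo_subset_Ioc_self
    apply Integrable.mono' hg
    · exact ContinuousOn.aestronglyMeasurable (hcont _ (fun q hq =>
        ⟨by have := hq.1; linarith, hq.2⟩)) measurableSet_Ioo
    · filter_upwards [ae_restrict_mem measurableSet_Ioo] with q hq
      have h0 : (1/2:ℝ) < q := hq.1
      have h1 : q < 1 := hq.2
      have hq1 : (0:ℝ) < 1 - q := by linarith
      have hb : q ^ (-((3:ℝ)/4)) ≤ q ^ (-(1:ℝ)) :=
        Real.rpow_le_rpow_of_exponent_ge (by linarith) (by linarith) (by norm_num)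
      have hb2 : q ^ (-(1:ℝ)) = q⁻¹ := Real.rpow_neg_one _
      have hb3 : q⁻¹ ≤ 2 := by
        rw [inv_le_comm₀ (by linarith) (by norm_num)] <;> linarith
      have hbb : q ^ (-((3:ℝ)/4)) ≤ 2 := by rw [hb2] at hb; linarith
      have hqp : (0:ℝ) < q ^ (-((3:ℝ)/4)) := Real.rpow_pos_of_pos (by linarith) _
      have h1qp : (0:ℝ) < (1 - q) ^ (-((1:ℝ)/2)) := Real.rpow_pos_of_pos hq1 _
      rw [Real.norm_eq_abs, abs_of_nonneg (by positivity)]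
      nlinarith
  have : IntegrableOn (fun q : ℝ => q ^ (-((3:ℝ)/4)) * (1 - q) ^ (-((1:ℝ)/2))) (Ioo 0 1) := by
    rw [hsplit]; exact hI1.union hI2
  exact this.congr_fun (fun q hq => (hw q hq).symm) measurableSet_Ioo

lemma ftc {t b : ℝ} (ht : 0 < t) (hb1 : 1 < b) (hb2 : b < 2) :
    ∫ x in Ioc 1 b, GG t x = gg t b := by
  have hcont : ContinuousOn (gg t) (Icc 1 b) := by
    apply ContinuousOn.div
    · exact (continuousOn_id.rpow_const (fun x hx => Or.inr (by norm_num))).mul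
        ((continuousOn_id.sub continuousOn_const).rpow_const
          (fun x hx => Or.inr (by norm_num)))
    · exact continuousOn_const.mul ((continuousOn_id.add continuousOn_const).rpow_const
        (fun x hx => Or.inr (by norm_num)))
    · intro x hx
      have hp : (0:ℝ) < x + 2*t := by have := hx.1; linarith
      have := Real.rpow_pos_of_pos hp ((3:ℝ)/2)
      positivity
  have hderiv : ∀ x ∈ Ioo (1:ℝ) b, HasDerivAt (gg t) (GG t x) x :=
    fun x hx => gg_hasDeriv ht hx.1
  have hint : IntervalIntegrable (GG t) volume 1 b :=
    (intervalIntegrable_iff_integrableOn_Ioc_of_le hb1.le).2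
      ((GG_integrable t ht).mono_set (fun x hx => ⟨hx.1, lt_of_le_of_lt hx.2 hb2⟩))
  have := intervalIntegral.integral_eq_sub_of_hasDerivAt_of_le hb1.le hcont hderiv hint
  rw [intervalIntegral.integral_of_le hb1.le] at this
  rw [this, gg_one]
  ring

lemma rpow_half_sq {u : ℝ} (h : 0 ≤ u) : ((u^2 : ℝ)) ^ ((1:ℝ)/2) = u := by
  rw [← Real.rpow_natCast u 2, ← Real.rpow_mul h]
  norm_num

lemma sq_rpow_half {q : ℝ} (h : 0 ≤ q) : (q ^ ((1:ℝ)/2))^2 = q := by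
  rw [← Real.rpow_natCast (q ^ ((1:ℝ)/2)) 2, ← Real.rpow_mul h]
  norm_num

lemma phi_img : (fun x : ℝ => ((2-x)/x)^2) '' Ioo 1 2 = Ioo 0 1 := by
  ext q
  constructor
  · rintro ⟨x, hx, rfl⟩
    have hx1 : (1:ℝ) < x := hx.1
    have hx2 : x < 2 := hx.2
    have hu : (0:ℝ) < (2-x)/x := div_pos (by linarith) (by linarith)
    have hu1 : (2-x)/x < 1 := by
      rw [div_lt_one (by linarith)]; linarith
    constructor
    · positivity
    · nlinarith
  · intro hq
    have hs0 : (0:ℝ) < q ^ ((1:ℝ)/2) := Real.rpow_pos_of_pos hq.1 _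
    have hs1 : q ^ ((1:ℝ)/2) < 1 := Real.rpow_lt_one hq.1.le hq.2 (by norm_num)
    set s := q ^ ((1:ℝ)/2) with hs
    refine ⟨2/(1+s), ⟨?_, ?_⟩, ?_⟩
    · rw [lt_div_iff₀ (by linarith)]; linarith
    · rw [div_lt_iff₀ (by linarith)]; linarith
    · have hx0 : (0:ℝ) < 2/(1+s) := by positivity
      have h2x : (2 - 2/(1+s))/(2/(1+s)) = s := by
        field_simp
        ring
      show ((2 - 2/(1+s))/(2/(1+s)))^2 = q
      rw [h2x, hs, sq_rpow_half hq.1.le]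

lemma phi_inj : InjOn (fun x : ℝ => ((2-x)/x)^2) (Ioo 1 2) := by
  have : StrictAntiOn (fun x : ℝ => ((2-x)/x)^2) (Ioo 1 2) := by
    intro x hx y hy hxy
    have hx1 : (1:ℝ) < x := hx.1
    have hy2 : y < 2 := hy.2
    have hb : (0:ℝ) < (2-y)/y := div_pos (by linarith) (by linarith)
    have hab : (2-y)/y < (2-x)/x := by
      rw [div_lt_div_iff₀ (by linarith) (by linarith)]
      nlinarith
    simp only []
    nlinarith
  exact this.injOn

lemma phi_hasDeriv {x : ℝ} (hx : 1 < x) :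
    HasDerivAt (fun x : ℝ => ((2-x)/x)^2) (-4*(2-x)/x^3) x := by
  have hx0 : x ≠ 0 := by intro h; rw [h] at hx; linarith
  have hu : HasDerivAt (fun x : ℝ => (2-x)/x) (((-1) * x - (2-x) * 1)/x^2) x :=
    (((hasDerivAt_id x).const_sub 2).div (hasDerivAt_id x) hx0)
  have := hu.pow 2
  refine this.congr_deriv ?_
  push_cast
  field_simp
  ring

lemma pointwise_alg {t x : ℝ} (ht : 0 < t) (hx1 : 1 < x) (hx2 : x < 2) :
    |(-4*(2-x)/x^3)| • (gg t (2 / (1 + (((2-x)/x)^2) ^ ((1:ℝ)/2))) * (cc (((2-x)/x)^2))⁻¹)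
      = 1 / (2 * (x + 2*t) ^ ((3:ℝ)/2) * (2 - x) ^ ((1:ℝ)/2)) := by
  have hx0 : (0:ℝ) < x := by linarith
  have h2x : (0:ℝ) < 2 - x := by linarith
  have hu : (0:ℝ) ≤ (2-x)/x := le_of_lt (div_pos h2x hx0)
  have h1 : (((2-x)/x)^2) ^ ((1:ℝ)/2) = (2-x)/x := rpow_half_sq hu
  have h2 : 2 / (1 + (2-x)/x) = x := by
    field_simp
    ring
  have h3 : (((2-x)/x)^2) ^ ((3:ℝ)/4) = ((2-x)/x) ^ ((3:ℝ)/2) := by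
    rw [← Real.rpow_natCast ((2-x)/x) 2, ← Real.rpow_mul hu]
    norm_num
  have h4 : 1 - ((2-x)/x)^2 = 4*(x-1)/x^2 := by
    field_simp
    ring
  have h5 : (4*(x-1)/x^2) ^ ((1:ℝ)/2) = 2 * (x-1) ^ ((1:ℝ)/2) / x := by
    rw [Real.div_rpow (by nlinarith) (by positivity),
      Real.mul_rpow (by norm_num) (by linarith),
      show ((4:ℝ) ^ ((1:ℝ)/2)) = 2 by
        rw [show (4:ℝ) = 2^2 by norm_num, rpow_half_sq (by norm_num : (0:ℝ) ≤ 2)],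
      rpow_half_sq hx0.le]
  have h6 : ((2-x)/x) ^ ((3:ℝ)/2) = (2-x) ^ ((3:ℝ)/2) / x ^ ((3:ℝ)/2) :=
    Real.div_rpow h2x.le hx0.le _
  have h7 : (2-x) ^ ((3:ℝ)/2) = (2-x) * (2-x) ^ ((1:ℝ)/2) := by
    rw [show ((3:ℝ)/2) = 1 + (1:ℝ)/2 by norm_num, Real.rpow_add h2x, Real.rpow_one]
  have h8 : x ^ ((3:ℝ)/2) = x * x ^ ((1:ℝ)/2) := by
    rw [show ((3:ℝ)/2) = 1 + (1:ℝ)/2 by norm_num, Real.rpow_add hx0, Real.rpow_one]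
  have habs : |(-4*(2-x)/x^3)| = 4*(2-x)/x^3 := by
    rw [abs_of_nonpos (by
      apply div_nonpos_of_nonpos_of_nonneg
      · nlinarith
      · positivity)]
    ring
  rw [habs, smul_eq_mul, gg, cc, h1, h2, h3, h4, h5, h6, h7, h8]
  have hA : (0:ℝ) < x ^ ((1:ℝ)/2) := Real.rpow_pos_of_pos hx0 _
  have hB : (0:ℝ) < (x-1) ^ ((1:ℝ)/2) := Real.rpow_pos_of_pos (by linarith) _
  have hC : (0:ℝ) < (2-x) ^ ((1:ℝ)/2) := Real.rpow_pos_of_pos h2x _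
  have hD : (0:ℝ) < (x + 2*t) ^ ((3:ℝ)/2) := Real.rpow_pos_of_pos (by linarith) _
  have hAA : x ^ ((1:ℝ)/2) * x ^ ((1:ℝ)/2) = x := by
    rw [← Real.rpow_add hx0]; norm_num
  field_simp
  linear_combination hAA

lemma meas_Delta2 : MeasurableSet Delta2 := by
  have h1 : Delta2 = ({z : ℝ×ℝ | 1 < z.1} ∩ {z | z.1 < 2} ∩ {z | 0 < z.2}) ∩
      {z | z.2 ≤ ((2 - z.1)/z.1)^2} := by
    ext z; simp only [Delta2, mem_setOf_eq, mem_inter_iff]; tauto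
  rw [h1]
  exact (((measurableSet_lt measurable_const measurable_fst).inter
    (measurableSet_lt measurable_fst measurable_const)).inter
    (measurableSet_lt measurable_const measurable_snd)).inter
    (measurableSet_le measurable_snd
      (((measurable_const.sub measurable_fst).div measurable_fst).pow_const 2))

lemma deriv_eq' {t : ℝ} (ht : 0 < t) {z : ℝ × ℝ} (hz : z ∈ Delta2) :
    deriv (fun x : ℝ => x ^ ((1:ℝ)/2) * (x - 1) ^ ((1:ℝ)/2) /
      (4 * (x + 2 * t) ^ ((3:ℝ)/2) * z.2 ^ ((3:ℝ)/4) * (1 - z.2) ^ ((1:ℝ)/2))) z.1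
    = GG t z.1 * (cc z.2)⁻¹ := by
  obtain ⟨hx1, hx2, hq0, hqle⟩ := hz
  have heq : (fun x : ℝ => x ^ ((1:ℝ)/2) * (x - 1) ^ ((1:ℝ)/2) /
      (4 * (x + 2 * t) ^ ((3:ℝ)/2) * z.2 ^ ((3:ℝ)/4) * (1 - z.2) ^ ((1:ℝ)/2)))
      = fun x => gg t x * (cc z.2)⁻¹ := by
    funext y
    simp only [gg, cc, div_eq_mul_inv, mul_inv]
    ring
  rw [heq]
  exact ((gg_hasDeriv ht hx1).mul_const _).deriv

lemma slice_iff {q : ℝ} (hq : q ∈ Ioo (0:ℝ) 1) (x : ℝ) :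
    (x, q) ∈ Delta2 ↔ x ∈ Ioc (1:ℝ) (2/(1 + q ^ ((1:ℝ)/2))) := by
  have hs0 : (0:ℝ) < q ^ ((1:ℝ)/2) := Real.rpow_pos_of_pos hq.1 _
  have hs1 : q ^ ((1:ℝ)/2) < 1 := Real.rpow_lt_one hq.1.le hq.2 (by norm_num)
  constructor
  · rintro ⟨h1, h2, h3, h4⟩
    simp only at h1 h2 h3 h4
    refine ⟨h1, ?_⟩
    have hx0 : (0:ℝ) < x := by linarith
    have hu : (0:ℝ) ≤ (2-x)/x := le_of_lt (div_pos (by linarith) hx0)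
    have h5 := Real.rpow_le_rpow hq.1.le h4 (by norm_num : (0:ℝ) ≤ 1/2)
    rw [rpow_half_sq hu] at h5
    have h6 : q ^ ((1:ℝ)/2) * x ≤ 2 - x := by
      rw [← le_div_iff₀ hx0]; exact h5
    rw [le_div_iff₀ (by linarith)]
    nlinarith
  · rintro ⟨h1, hle⟩
    have hb2 : 2/(1 + q ^ ((1:ℝ)/2)) < 2 := by
      rw [div_lt_iff₀ (by linarith)]; linarith
    have hx0 : (0:ℝ) < x := by linarith
    have hx2 : x < 2 := lt_of_le_of_lt hle hb2
    have h7 : x * (1 + q ^ ((1:ℝ)/2)) ≤ 2 := by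
      rw [← le_div_iff₀ (by linarith)]; exact hle
    have h8 : q ^ ((1:ℝ)/2) ≤ (2-x)/x := by
      rw [le_div_iff₀ hx0]; nlinarith
    have h9 : (q ^ ((1:ℝ)/2))^2 ≤ ((2-x)/x)^2 := by
      have := pow_le_pow_left₀ hs0.le h8 2
      exact this
    rw [sq_rpow_half hq.1.le] at h9
    exact ⟨h1, hx2, hq.1, h9⟩

lemma slice_empty {q : ℝ} (hq : q ∉ Ioo (0:ℝ) 1) (x : ℝ) : (x, q) ∉ Delta2 := by
  rintro ⟨h1, h2, h3, h4⟩
  simp only at h1 h2 h3 h4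
  apply hq
  refine ⟨h3, ?_⟩
  have hx0 : (0:ℝ) < x := by linarith
  have hu1 : (2-x)/x < 1 := by rw [div_lt_one hx0]; linarith
  have hu0 : (0:ℝ) < (2-x)/x := div_pos (by linarith) hx0
  nlinarith

/-- For `t > 0`, `∫_{Δ₂} ∂F₂/∂x dx dq = ∫₁² dx/(2(x+2t)^{3/2}(2−x)^{1/2})` where
`F₂(x,q) = x^{1/2}(x−1)^{1/2}/(4(x+2t)^{3/2}q^{3/4}(1−q)^{1/2})`. -/
theorem stmt14 (t : ℝ) (ht : 0 < t) :
    (∫ z in Delta2, deriv (fun x : ℝ =>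
        x ^ ((1:ℝ)/2) * (x - 1) ^ ((1:ℝ)/2) /
          (4 * (x + 2 * t) ^ ((3:ℝ)/2) * z.2 ^ ((3:ℝ)/4) * (1 - z.2) ^ ((1:ℝ)/2))) z.1)
    = ∫ x in Set.Ioo (1:ℝ) 2, 1 / (2 * (x + 2 * t) ^ ((3:ℝ)/2) * (2 - x) ^ ((1:ℝ)/2)) := by
  have hMeas : MeasurableSet Delta2 := meas_Delta2
  rw [setIntegral_congr_fun hMeas (fun z hz => deriv_eq' ht hz)]
  have hInt : IntegrableOn (fun z : ℝ×ℝ => GG t z.1 * (cc z.2)⁻¹) Delta2 := by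
    have hsub : Delta2 ⊆ (Ioo 1 2) ×ˢ (Ioo 0 1) := by
      rintro ⟨x,q⟩ ⟨h1,h2,h3,h4⟩
      simp only at h1 h2 h3 h4
      have hx0 : (0:ℝ) < x := by linarith
      have hu0 : (0:ℝ) < (2-x)/x := div_pos (by linarith) hx0
      have hu1 : (2-x)/x < 1 := by rw [div_lt_one hx0]; linarith
      exact ⟨⟨h1,h2⟩, ⟨h3, by nlinarith⟩⟩
    have h2 : IntegrableOn (fun z : ℝ×ℝ => GG t z.1 * (cc z.2)⁻¹)
        ((Ioo 1 2) ×ˢ (Ioo 0 1)) := by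
      rw [IntegrableOn, Measure.volume_eq_prod, ← Measure.prod_restrict]
      exact (GG_integrable t ht).mul_prod cc_inv_integrable
    exact h2.mono_set hsub
  rw [← integral_indicator hMeas, Measure.volume_eq_prod,
    integral_prod_symm _ ((integrable_indicator_iff hMeas).2 hInt)]
  have hslice : ∀ q : ℝ,
      (∫ x, Delta2.indicator (fun z : ℝ×ℝ => GG t z.1 * (cc z.2)⁻¹) (x, q))
      = (Ioo (0:ℝ) 1).indicator
          (fun q => gg t (2/(1 + q ^ ((1:ℝ)/2))) * (cc q)⁻¹) q := by
    intro q
    by_cases hq : q ∈ Ioo (0:ℝ) 1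
    · rw [indicator_of_mem hq]
      have hset : (fun x => Delta2.indicator (fun z : ℝ×ℝ => GG t z.1 * (cc z.2)⁻¹) (x, q))
          = (Ioc (1:ℝ) (2/(1 + q ^ ((1:ℝ)/2)))).indicator
              (fun x => GG t x * (cc q)⁻¹) := by
        funext x
        by_cases hx : (x, q) ∈ Delta2
        · rw [indicator_of_mem hx, indicator_of_mem ((slice_iff hq x).1 hx)]
        · rw [indicator_of_notMem hx,
            indicator_of_notMem (fun h => hx ((slice_iff hq x).2 h))]
      rw [hset, integral_indicator measurableSet_Ioc, integral_mul_const]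
      have hs0 : (0:ℝ) < q ^ ((1:ℝ)/2) := Real.rpow_pos_of_pos hq.1 _
      have hs1 : q ^ ((1:ℝ)/2) < 1 := Real.rpow_lt_one hq.1.le hq.2 (by norm_num)
      have hb1 : 1 < 2/(1 + q ^ ((1:ℝ)/2)) := by
        rw [lt_div_iff₀ (by linarith)]; linarith
      have hb2 : 2/(1 + q ^ ((1:ℝ)/2)) < 2 := by
        rw [div_lt_iff₀ (by linarith)]; linarith
      rw [ftc ht hb1 hb2]
    · rw [indicator_of_notMem hq]
      have hset : (fun x => Delta2.indicator (fun z : ℝ×ℝ => GG t z.1 * (cc z.2)⁻¹) (x, q))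
          = fun _ : ℝ => (0:ℝ) :=
        funext fun x => indicator_of_notMem (slice_empty hq x) _
      rw [hset, integral_zero]
  rw [integral_congr_ae (Filter.Eventually.of_forall hslice),
    integral_indicator measurableSet_Ioo]
  rw [← phi_img, integral_image_eq_integral_abs_deriv_smul measurableSet_Ioo
    (fun x hx => (phi_hasDeriv hx.1).hasDerivWithinAt) phi_inj]
  exact setIntegral_congr_fun measurableSet_Ioo (fun x hx => pointwise_alg ht hx.1 hx.2)
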